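/- Let $P \subset \mathbb{R}^n$ be a compact convex polytope with nonempty interior and let $F \subsetneq \partial P$ be a closed subset of its boundary which is homeomorphic to a closed hemisphere of the sphere $S^{n-1}$ under a homeomorphism $\partial P \simeq S^{n-1}$. Then $P \setminus F$ is homeomorphic to a closed half-space in $\mathbb{R}^n$. -/

import Mathlib

open Metric Set
set_option linter.unusedSectionVars false

local notation "⟪" x ", " y "⟫" => @inner ℝ _ _ x y

noncomputable section Stmt6Aux

namespace Stmt6

variable {ι : Type*} [Fintype ι] [DecidableEq ι]

/-- The `i`-th standard basis vector. -/
def e0 (i : ι) : EuclideanSpace ℝ ι := EuclideanSpace.single i 1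

/-- The component of `x` orthogonal to `e0 i`. -/
def vv (i : ι) (x : EuclideanSpace ℝ ι) : EuclideanSpace ℝ ι := x - x i • e0 i

lemma e0_apply (i : ι) : e0 i i = 1 := by simp [e0]

lemma inner_e0 (i : ι) (x : EuclideanSpace ℝ ι) : ⟪e0 i, x⟫ = x i := by
  simp [e0, EuclideanSpace.inner_single_left]

lemma norm_e0 (i : ι) : ‖e0 i‖ = 1 := by simp [e0]

lemma vv_apply (i : ι) (x : EuclideanSpace ℝ ι) : vv i x i = 0 := by
  simp [vv, e0_apply]

lemma decomp (i : ι) (x : EuclideanSpace ℝ ι) : x i • e0 i + vv i x = x := by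
  simp [vv]

lemma apply_of (i : ι) (t : ℝ) (u : EuclideanSpace ℝ ι) (hu : u i = 0) :
    (t • e0 i + u) i = t := by
  simp [e0_apply, hu]

lemma vv_of (i : ι) (t : ℝ) (u : EuclideanSpace ℝ ι) (hu : u i = 0) :
    vv i (t • e0 i + u) = u := by
  rw [vv, apply_of i t u hu]; abel

lemma norm_sq_of (i : ι) (t : ℝ) (u : EuclideanSpace ℝ ι) (hu : u i = 0) :
    ‖t • e0 i + u‖ ^ 2 = t ^ 2 + ‖u‖ ^ 2 := by
  have h1 : ⟪t • e0 i, u⟫ = 0 := by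
    rw [real_inner_smul_left, inner_e0, hu, mul_zero]
  rw [norm_add_sq_real, h1, norm_smul, norm_e0]
  simp [mul_pow, sq_abs]

lemma norm_sq_split (i : ι) (x : EuclideanSpace ℝ ι) :
    ‖x‖ ^ 2 = x i ^ 2 + ‖vv i x‖ ^ 2 := by
  conv_lhs => rw [← decomp i x]
  exact norm_sq_of i _ _ (vv_apply i x)

lemma continuous_vv (i : ι) : Continuous (vv i) :=
  continuous_id.sub ((PiLp.continuous_apply 2 _ i).fun_smul continuous_const)

/-- The ball minus the closed lower hemisphere. -/
def DD (i : ι) : Set (EuclideanSpace ℝ ι) :=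
  closedBall 0 1 \ (sphere 0 1 ∩ {y | y i ≤ 0})

/-- The closed half-space. -/
def TT (i : ι) : Set (EuclideanSpace ℝ ι) := {x | 0 ≤ x i}

def cc (i : ι) (x : EuclideanSpace ℝ ι) : ℝ := Real.sqrt (1 - ‖vv i x‖ ^ 2)

lemma mem_DD_iff (i : ι) (x : EuclideanSpace ℝ ι) :
    x ∈ DD i ↔ ‖vv i x‖ < 1 ∧ -(cc i x) < x i ∧ x i ≤ cc i x := by
  have hr0 : (0:ℝ) ≤ ‖vv i x‖ := norm_nonneg _
  have hx2 : ‖x‖ ^ 2 = x i ^ 2 + ‖vv i x‖ ^ 2 := norm_sq_split i x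
  set r := ‖vv i x‖ with hrdef
  set s := x i with hsdef
  constructor
  · rintro ⟨h1, h2⟩
    rw [mem_closedBall_zero_iff] at h1
    have hn2 : s ^ 2 + r ^ 2 ≤ 1 := by nlinarith [norm_nonneg x]
    have hxs : ¬ (‖x‖ = 1 ∧ s ≤ 0) := by
      intro hc
      exact h2 ⟨mem_sphere_zero_iff_norm.mpr hc.1, hc.2⟩
    have hr1 : r < 1 := by
      rcases lt_or_ge r 1 with h | h
      · exact h
      · exfalso
        have hs0 : s = 0 := by nlinarith
        apply hxs
        constructor
        · nlinarith [norm_nonneg x]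
        · simp [hs0]
    have hc2 : cc i x ^ 2 = 1 - r ^ 2 := Real.sq_sqrt (by nlinarith)
    have hcpos : 0 < cc i x := Real.sqrt_pos.mpr (by nlinarith)
    have hsle : s ≤ cc i x := by nlinarith
    have hsge : -(cc i x) ≤ s := by nlinarith
    have hne : s ≠ -(cc i x) := by
      intro he
      apply hxs
      constructor
      · nlinarith [norm_nonneg x]
      · rw [he]; linarith
    exact ⟨hr1, lt_of_le_of_ne hsge (Ne.symm (by simpa using hne)), hsle⟩
  · rintro ⟨hr1, hlt, hle⟩
    have hc2 : cc i x ^ 2 = 1 - r ^ 2 := Real.sq_sqrt (by nlinarith)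
    have hcpos : 0 < cc i x := Real.sqrt_pos.mpr (by nlinarith)
    constructor
    · rw [mem_closedBall_zero_iff]
      nlinarith [norm_nonneg x]
    · rintro ⟨hsp, hs0⟩
      rw [mem_sphere_zero_iff_norm] at hsp
      simp only [mem_setOf_eq] at hs0
      have : s ^ 2 = cc i x ^ 2 := by nlinarith
      nlinarith

/-- Homeomorphism `DD i → TT i`, forward map. -/
def Phi (i : ι) (x : EuclideanSpace ℝ ι) : EuclideanSpace ℝ ι :=
  ((cc i x - x i) / (cc i x + x i)) • e0 i + (1 - ‖vv i x‖)⁻¹ • vv i x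

/-- Homeomorphism `DD i → TT i`, inverse map. -/
def Psi (i : ι) (y : EuclideanSpace ℝ ι) : EuclideanSpace ℝ ι :=
  (Real.sqrt (1 - (‖vv i y‖ / (1 + ‖vv i y‖)) ^ 2) * ((1 - y i) / (1 + y i))) • e0 i
    + (1 + ‖vv i y‖)⁻¹ • vv i y

lemma phi_mem (i : ι) (x : EuclideanSpace ℝ ι) (hx : x ∈ DD i) : 0 ≤ Phi i x i := by
  obtain ⟨hr1, hlt, hle⟩ := (mem_DD_iff i x).mp hx
  have h0 : ((1 - ‖vv i x‖)⁻¹ • vv i x) i = 0 := by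
    simp [vv_apply]
  have : Phi i x i = (cc i x - x i) / (cc i x + x i) := by
    rw [Phi, apply_of i _ _ h0]
  rw [this]
  apply div_nonneg <;> linarith

lemma psi_phi (i : ι) (x : EuclideanSpace ℝ ι) (hx : x ∈ DD i) : Psi i (Phi i x) = x := by
  obtain ⟨hr1, hlt, hle⟩ := (mem_DD_iff i x).mp hx
  set r := ‖vv i x‖ with hrdef
  have hr0 : (0:ℝ) ≤ r := norm_nonneg _
  set s := x i with hsdef
  set c := cc i x with hcdef
  have hc2 : c ^ 2 = 1 - r ^ 2 := Real.sq_sqrt (by nlinarith)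
  have hcpos : 0 < c := Real.sqrt_pos.mpr (by nlinarith)
  have h1r : (0:ℝ) < 1 - r := by linarith
  set t := (c - s) / (c + s) with htdef
  set u := (1 - r)⁻¹ • vv i x with hudef
  have hui : u i = 0 := by simp [hudef, vv_apply]
  have hPhi : Phi i x = t • e0 i + u := rfl
  have hyi : Phi i x i = t := by rw [hPhi, apply_of i _ _ hui]
  have hyv : vv i (Phi i x) = u := by rw [hPhi, vv_of i _ _ hui]
  have hnu : ‖u‖ = r / (1 - r) := by
    rw [hudef, norm_smul, norm_inv, Real.norm_eq_abs, abs_of_pos h1r, ← hrdef]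
    field_simp
  have hrho : ‖u‖ / (1 + ‖u‖) = r := by
    rw [hnu]; field_simp; ring
  have hinv : (1 + ‖u‖)⁻¹ = 1 - r := by
    rw [hnu]
    have : 1 + r / (1 - r) = (1 - r)⁻¹ := by field_simp; ring
    rw [this, inv_inv]
  have hcs : (0:ℝ) < c + s := by linarith
  have ht1 : (0:ℝ) < 1 + t := by
    rw [htdef]
    have : 1 + (c - s) / (c + s) = 2 * c / (c + s) := by field_simp; ring
    rw [this]
    positivity
  have hst : c * ((1 - t) / (1 + t)) = s := by
    rw [htdef]
    have h1t : 1 - (c - s) / (c + s) = 2 * s / (c + s) := by field_simp; ring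
    have h2t : 1 + (c - s) / (c + s) = 2 * c / (c + s) := by field_simp; ring
    rw [h1t, h2t, div_div_div_eq]
    field_simp
  rw [Psi, hyi, hyv, hrho, hinv]
  have hsqrt : Real.sqrt (1 - r ^ 2) = c := rfl
  rw [hsqrt, hst, hudef, smul_smul]
  have : (1 - r) * (1 - r)⁻¹ = 1 := by field_simp
  rw [this, one_smul, decomp]

lemma psi_facts (i : ι) (y : EuclideanSpace ℝ ι) (hy : 0 ≤ y i) :
    Psi i y ∈ DD i ∧ Phi i (Psi i y) = y := by
  set t := y i with htdef
  set w := vv i y with hwdef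
  set ρ := ‖w‖ with hrhodef
  have hρ0 : (0:ℝ) ≤ ρ := norm_nonneg _
  have hρ1 : (0:ℝ) < 1 + ρ := by linarith
  have ht1 : (0:ℝ) < 1 + t := by linarith
  set r := ρ / (1 + ρ) with hrdef
  have hr0 : (0:ℝ) ≤ r := by positivity
  have hr1 : r < 1 := by rw [hrdef, div_lt_one hρ1]; linarith
  set c := Real.sqrt (1 - r ^ 2) with hcdef
  have hc2 : c ^ 2 = 1 - r ^ 2 := Real.sq_sqrt (by nlinarith)
  have hcpos : 0 < c := Real.sqrt_pos.mpr (by nlinarith)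
  set s := c * ((1 - t) / (1 + t)) with hsdef
  set u := (1 + ρ)⁻¹ • w with hudef
  have hui : u i = 0 := by simp [hudef, hwdef, vv_apply]
  have hPsi : Psi i y = s • e0 i + u := rfl
  have hxi : Psi i y i = s := by rw [hPsi, apply_of i _ _ hui]
  have hxv : vv i (Psi i y) = u := by rw [hPsi, vv_of i _ _ hui]
  have hnu : ‖u‖ = r := by
    rw [hudef, norm_smul, norm_inv, Real.norm_eq_abs, abs_of_pos hρ1, ← hrhodef, hrdef]
    field_simp
  have hq1 : (1 - t) / (1 + t) ≤ 1 := by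
    rw [div_le_one ht1]; linarith
  have hq2 : (-1 : ℝ) < (1 - t) / (1 + t) := by
    rw [lt_div_iff₀ ht1]; linarith
  have hsle : s ≤ c := by
    rw [hsdef]
    nlinarith
  have hslt : -c < s := by
    rw [hsdef]
    nlinarith
  have hmem : Psi i y ∈ DD i := by
    rw [mem_DD_iff, hxv, hnu]
    have hcc : cc i (Psi i y) = c := by
      rw [cc, hxv, hnu, hcdef]
    rw [hcc, hxi]
    exact ⟨hr1, hslt, hsle⟩
  refine ⟨hmem, ?_⟩
  -- now compute Phi (Psi y)
  have hccx : cc i (Psi i y) = c := by rw [cc, hxv, hnu, hcdef]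
  have h1r : 1 - r = (1 + ρ)⁻¹ := by
    rw [hrdef]; field_simp; ring
  have hts : (c - s) / (c + s) = t := by
    rw [hsdef]
    have e1 : c - c * ((1 - t) / (1 + t)) = c * (2 * t) / (1 + t) := by
      field_simp; ring
    have e2 : c + c * ((1 - t) / (1 + t)) = c * 2 / (1 + t) := by
      field_simp; ring
    rw [e1, e2, div_div_div_eq]
    have hne : c * 2 * (1 + t) ≠ 0 := by positivity
    field_simp
  rw [Phi, hxi, hxv, hnu, hccx, hts, h1r, inv_inv, hudef, smul_smul]
  have : (1 + ρ) * (1 + ρ)⁻¹ = 1 := by field_simp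
  rw [this, one_smul, hwdef, htdef, decomp]

lemma continuous_cc (i : ι) : Continuous (cc i) :=
  Real.continuous_sqrt.comp (continuous_const.sub ((continuous_vv i).norm.pow 2))

lemma continuousOn_Phi (i : ι) : ContinuousOn (Phi i) (DD i) := by
  apply ContinuousOn.add
  · apply ContinuousOn.fun_smul _ continuousOn_const
    apply ContinuousOn.div
    · exact ((continuous_cc i).sub (PiLp.continuous_apply 2 _ i)).continuousOn
    · exact ((continuous_cc i).add (PiLp.continuous_apply 2 _ i)).continuousOn
    · intro x hx
      obtain ⟨hr1, hlt, hle⟩ := (mem_DD_iff i x).mp hx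
      intro h
      rw [add_eq_zero_iff_eq_neg] at h
      -- cc i x = - x i
      have : -(cc i x) = x i := by linarith [h]
      linarith [hlt, this]
  · apply ContinuousOn.fun_smul
    · apply ContinuousOn.inv₀
      · exact (continuous_const.sub (continuous_vv i).norm).continuousOn
      · intro x hx
        obtain ⟨hr1, _, _⟩ := (mem_DD_iff i x).mp hx
        intro h
        have : ‖vv i x‖ = 1 := by linarith [sub_eq_zero.mp h]
        linarith
    · exact (continuous_vv i).continuousOn

lemma continuousOn_Psi (i : ι) : ContinuousOn (Psi i) (TT i) := by
  have hc1 : Continuous fun y : EuclideanSpace ℝ ι =>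
      Real.sqrt (1 - (‖vv i y‖ / (1 + ‖vv i y‖)) ^ 2) := by
    apply Real.continuous_sqrt.comp
    apply continuous_const.sub
    apply Continuous.pow
    apply Continuous.div (continuous_vv i).norm (continuous_const.add (continuous_vv i).norm)
    intro y
    show (1:ℝ) + ‖vv i y‖ ≠ 0
    positivity
  have hc2 : Continuous fun y : EuclideanSpace ℝ ι => (1 + ‖vv i y‖)⁻¹ • vv i y := by
    apply Continuous.fun_smul _ (continuous_vv i)
    apply Continuous.inv₀ (continuous_const.add (continuous_vv i).norm)
    intro y
    show (1:ℝ) + ‖vv i y‖ ≠ 0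
    positivity
  apply ContinuousOn.add _ hc2.continuousOn
  apply ContinuousOn.fun_smul _ continuousOn_const
  apply ContinuousOn.mul hc1.continuousOn
  apply ContinuousOn.div (continuous_const.sub (PiLp.continuous_apply 2 _ i)).continuousOn
    (continuous_const.add (PiLp.continuous_apply 2 _ i)).continuousOn
  intro y hy
  have : (0:ℝ) ≤ y i := hy
  show (1:ℝ) + y i ≠ 0
  positivity

/-- The homeomorphism from the ball minus the closed lower hemisphere to the
closed upper half-space. -/
def phiHomeo (i : ι) : (DD i) ≃ₜ (TT i) where
  toFun x := ⟨Phi i ↑x, phi_mem i ↑x x.2⟩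
  invFun y := ⟨Psi i ↑y, (psi_facts i ↑y y.2).1⟩
  left_inv x := Subtype.ext (psi_phi i ↑x x.2)
  right_inv y := Subtype.ext (psi_facts i ↑y y.2).2
  continuous_toFun := ((continuousOn_Phi i).restrict).subtype_mk _
  continuous_invFun := ((continuousOn_Psi i).restrict).subtype_mk _

section Alexander

variable {E : Type*} [NormedAddCommGroup E] [NormedSpace ℝ E]

lemma mem_sphere_normalize {x : E} (hx : x ≠ 0) : ‖x‖⁻¹ • x ∈ sphere (0:E) 1 := by
  rw [mem_sphere_zero_iff_norm, norm_smul, norm_inv, norm_norm,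
    inv_mul_cancel₀ (norm_ne_zero_iff.mpr hx)]

open scoped Classical in
/-- Cone extension of a self-homeomorphism of the unit sphere. -/
def alexMap (h : sphere (0:E) 1 ≃ₜ sphere (0:E) 1) (x : E) : E :=
  if hx : x = 0 then 0 else ‖x‖ • (h ⟨‖x‖⁻¹ • x, mem_sphere_normalize hx⟩ : E)

lemma norm_alexMap (h : sphere (0:E) 1 ≃ₜ sphere (0:E) 1) (x : E) :
    ‖alexMap h x‖ = ‖x‖ := by
  rcases eq_or_ne x 0 with rfl | hx
  · simp [alexMap]
  · rw [alexMap, dif_neg hx, norm_smul, norm_norm]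
    have : ‖(h ⟨‖x‖⁻¹ • x, mem_sphere_normalize hx⟩ : E)‖ = 1 :=
      mem_sphere_zero_iff_norm.mp (h _).2
    rw [this, mul_one]

lemma alexMap_sphere (h : sphere (0:E) 1 ≃ₜ sphere (0:E) 1) {x : E}
    (hx : x ∈ sphere (0:E) 1) : alexMap h x = (h ⟨x, hx⟩ : E) := by
  have hx1 : ‖x‖ = 1 := mem_sphere_zero_iff_norm.mp hx
  have hx0 : x ≠ 0 := by
    intro h0; rw [h0] at hx1; simp at hx1
  rw [alexMap, dif_neg hx0]
  have : (⟨‖x‖⁻¹ • x, mem_sphere_normalize hx0⟩ : sphere (0:E) 1) = ⟨x, hx⟩ := by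
    apply Subtype.ext
    simp [hx1]
  rw [this, hx1, one_smul]

lemma alexMap_alexMap (h : sphere (0:E) 1 ≃ₜ sphere (0:E) 1) (x : E) :
    alexMap h.symm (alexMap h x) = x := by
  rcases eq_or_ne x 0 with rfl | hx
  · simp [alexMap]
  · have hx0 : alexMap h x ≠ 0 := by
      intro h0
      have := norm_alexMap h x
      rw [h0, norm_zero] at this
      exact hx (norm_eq_zero.mp this.symm)
    set z : sphere (0:E) 1 := h ⟨‖x‖⁻¹ • x, mem_sphere_normalize hx⟩ with hzdef
    have hax : alexMap h x = ‖x‖ • (z : E) := by rw [alexMap, dif_neg hx]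
    rw [alexMap, dif_neg hx0]
    have hxn : ‖x‖ ≠ 0 := norm_ne_zero_iff.mpr hx
    have hsub : (⟨‖alexMap h x‖⁻¹ • alexMap h x, mem_sphere_normalize hx0⟩ :
        sphere (0:E) 1) = z := by
      apply Subtype.ext
      show ‖alexMap h x‖⁻¹ • alexMap h x = (z : E)
      rw [norm_alexMap, hax, smul_smul, inv_mul_cancel₀ hxn, one_smul]
    rw [hsub, hzdef, Homeomorph.symm_apply_apply, norm_alexMap]
    show ‖x‖ • ‖x‖⁻¹ • x = x
    rw [smul_smul, mul_inv_cancel₀ hxn, one_smul]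

lemma continuous_alexMap (h : sphere (0:E) 1 ≃ₜ sphere (0:E) 1) :
    Continuous (alexMap h) := by
  rw [continuous_iff_continuousAt]
  intro x
  rcases eq_or_ne x 0 with rfl | hx
  · have h0 : alexMap h 0 = 0 := by simp [alexMap]
    rw [ContinuousAt, h0]
    apply squeeze_zero_norm (fun y => (norm_alexMap h y).le)
    simpa using tendsto_norm_zero
  · have hopen : IsOpen {y : E | y ≠ 0} := isOpen_compl_singleton
    have hco : ContinuousOn (alexMap h) {y : E | y ≠ 0} := by
      rw [continuousOn_iff_continuous_restrict]
      have heq : ({y : E | y ≠ 0}).domRestrict (alexMap h) = fun y : {y : E | y ≠ 0} =>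
          ‖(y:E)‖ • (h ⟨‖(y:E)‖⁻¹ • (y:E), mem_sphere_normalize y.2⟩ : E) := by
        funext y
        simp only [Set.domRestrict_apply, alexMap, dif_neg y.2]
      rw [heq]
      have hnorm : Continuous fun y : {y : E | y ≠ 0} => ‖(y:E)‖ :=
        continuous_subtype_val.norm
      apply hnorm.smul
      apply continuous_subtype_val.comp
      apply h.continuous.comp
      apply Continuous.subtype_mk
      exact (hnorm.inv₀ fun y => norm_ne_zero_iff.mpr y.2).smul continuous_subtype_val
    exact hco.continuousAt (hopen.mem_nhds hx)

/-- Cone extension of a self-homeomorphism of the unit sphere, as a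
self-homeomorphism of the ambient space. -/
def alexHomeo (h : sphere (0:E) 1 ≃ₜ sphere (0:E) 1) : E ≃ₜ E where
  toFun := alexMap h
  invFun := alexMap h.symm
  left_inv := alexMap_alexMap h
  right_inv x := by
    have := alexMap_alexMap h.symm x
    rwa [Homeomorph.symm_symm] at this
  continuous_toFun := continuous_alexMap h
  continuous_invFun := continuous_alexMap h.symm

lemma image_closedBall_of_norm (f : E ≃ₜ E) (hf : ∀ x, ‖f x‖ = ‖x‖) :
    f '' closedBall 0 1 = closedBall 0 1 := by
  ext y
  simp only [mem_image, mem_closedBall_zero_iff]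
  constructor
  · rintro ⟨x, hx, rfl⟩
    rw [hf]; exact hx
  · intro hy
    refine ⟨f.symm y, ?_, f.apply_symm_apply y⟩
    have := hf (f.symm y)
    rw [f.apply_symm_apply] at this
    rw [← this]; exact hy

end Alexander

section Reflection

variable (i : ι)

/-- Reflection negating the `i`-th coordinate. -/
def reflMap (x : EuclideanSpace ℝ ι) : EuclideanSpace ℝ ι := x - (2 * x i) • e0 i

lemma reflMap_apply (x : EuclideanSpace ℝ ι) : reflMap i x i = -(x i) := by
  simp [reflMap, e0_apply]
  ring

lemma reflMap_reflMap (x : EuclideanSpace ℝ ι) : reflMap i (reflMap i x) = x := by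
  rw [reflMap, reflMap_apply, reflMap]
  have : (2 * -x i) • e0 i = -((2 * x i) • e0 i) := by
    rw [← neg_smul]; ring_nf
  rw [this, sub_neg_eq_add, sub_add_cancel]

lemma norm_reflMap (x : EuclideanSpace ℝ ι) : ‖reflMap i x‖ = ‖x‖ := by
  have hsq : ‖reflMap i x‖ ^ 2 = ‖x‖ ^ 2 := by
    rw [reflMap, norm_sub_sq_real]
    have h1 : ⟪x, (2 * x i) • e0 i⟫ = (2 * x i) * x i := by
      rw [real_inner_smul_right, real_inner_comm, inner_e0]
    have h2 : ‖(2 * x i) • e0 i‖ ^ 2 = (2 * x i) ^ 2 := by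
      rw [norm_smul, norm_e0, mul_one, Real.norm_eq_abs, sq_abs]
    rw [h1, h2]
    ring
  have := congrArg Real.sqrt hsq
  rwa [Real.sqrt_sq (norm_nonneg _), Real.sqrt_sq (norm_nonneg _)] at this

lemma continuous_reflMap : Continuous (reflMap i) :=
  continuous_id.sub ((continuous_const.mul (PiLp.continuous_apply 2 _ i)).fun_smul continuous_const)

/-- Reflection as a homeomorphism. -/
def reflHomeo : EuclideanSpace ℝ ι ≃ₜ EuclideanSpace ℝ ι where
  toFun := reflMap i
  invFun := reflMap i
  left_inv := reflMap_reflMap i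
  right_inv := reflMap_reflMap i
  continuous_toFun := continuous_reflMap i
  continuous_invFun := continuous_reflMap i

lemma reflHomeo_image_hemisphere :
    reflHomeo i '' (sphere 0 1 ∩ {y | 0 ≤ y i}) = sphere 0 1 ∩ {y | y i ≤ 0} := by
  ext y
  constructor
  · rintro ⟨z, ⟨hz1, hz2⟩, rfl⟩
    refine ⟨?_, ?_⟩
    · rw [mem_sphere_zero_iff_norm] at hz1 ⊢
      show ‖reflMap i z‖ = 1
      rw [norm_reflMap]; exact hz1
    · show reflMap i z i ≤ 0
      rw [reflMap_apply]
      simp only [mem_setOf_eq] at hz2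
      linarith
  · rintro ⟨hy1, hy2⟩
    refine ⟨reflMap i y, ⟨?_, ?_⟩, reflMap_reflMap i y⟩
    · rw [mem_sphere_zero_iff_norm] at hy1 ⊢
      rw [norm_reflMap]; exact hy1
    · show 0 ≤ reflMap i y i
      rw [reflMap_apply]
      simp only [mem_setOf_eq] at hy2
      linarith

end Reflection

/-- Restriction of a homeomorphism to a subset and its image. -/
def subHomeo {X Y : Type*} [TopologicalSpace X] [TopologicalSpace Y] (f : X ≃ₜ Y)
    {s : Set X} {t : Set Y} (h : f '' s = t) : s ≃ₜ t :=
  (f.image s).trans (Homeomorph.setCongr h)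

end Stmt6

end Stmt6Aux

open Stmt6 in
/-- Removing from a compact convex polytope a closed subset of its boundary
corresponding to a closed hemisphere yields a space homeomorphic to a closed
half-space. -/
theorem stmt_6 {n : ℕ} (hn : 0 < n) (P F : Set (EuclideanSpace ℝ (Fin n)))
    (hPcomp : IsCompact P) (hPconv : Convex ℝ P) (hPint : (interior P).Nonempty)
    (hpoly : ∃ S : Finset (EuclideanSpace ℝ (Fin n)), P = convexHull ℝ (S : Set (EuclideanSpace ℝ (Fin n))))
    (hFsub : F ⊆ frontier P) (hFclosed : IsClosed F) (hFne : F ≠ frontier P)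
    (e : (frontier P) ≃ₜ (Metric.sphere (0 : EuclideanSpace ℝ (Fin n)) 1))
    (he : (⇑e) '' {x : frontier P | (x : EuclideanSpace ℝ (Fin n)) ∈ F} =
      {y : Metric.sphere (0 : EuclideanSpace ℝ (Fin n)) 1 |
        0 ≤ (y : EuclideanSpace ℝ (Fin n)) ⟨0, hn⟩}) :
    Nonempty ((P \ F : Set (EuclideanSpace ℝ (Fin n))) ≃ₜ
      {x : EuclideanSpace ℝ (Fin n) | 0 ≤ x ⟨0, hn⟩}) := by
  classical
  obtain ⟨g, hgi, hgc, hgf⟩ :=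
    exists_homeomorph_image_interior_closure_frontier_eq_unitBall hPconv hPint hPcomp.isBounded
  have hgP : g '' P = closedBall 0 1 := by
    rw [← hPcomp.isClosed.closure_eq]; exact hgc
  set i0 : Fin n := ⟨0, hn⟩ with hi0
  let gS : (frontier P) ≃ₜ (sphere (0 : EuclideanSpace ℝ (Fin n)) 1) := subHomeo g hgf
  let h : (sphere (0 : EuclideanSpace ℝ (Fin n)) 1) ≃ₜ
      (sphere (0 : EuclideanSpace ℝ (Fin n)) 1) := gS.symm.trans e
  have hFs : g '' F ⊆ sphere (0 : EuclideanSpace ℝ (Fin n)) 1 := by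
    rw [← hgf]; exact image_mono hFsub
  have hkey : (alexHomeo h) '' (g '' F) = sphere 0 1 ∩ {y | 0 ≤ y i0} := by
    ext y
    constructor
    · rintro ⟨z, ⟨w, hwF, rfl⟩, rfl⟩
      have hz : g w ∈ sphere (0 : EuclideanSpace ℝ (Fin n)) 1 := hFs (mem_image_of_mem g hwF)
      set xw : frontier P := ⟨w, hFsub hwF⟩ with hxw
      have hA : alexHomeo h (g w) = ↑(h ⟨g w, hz⟩) := alexMap_sphere h hz
      have hgs : gS xw = ⟨g w, hz⟩ := Subtype.ext rfl
      have hhe : h ⟨g w, hz⟩ = e xw := by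
        rw [← hgs]
        show (gS.symm.trans e) (gS xw) = e xw
        rw [Homeomorph.trans_apply, Homeomorph.symm_apply_apply]
      have hmem : e xw ∈ {y : sphere (0 : EuclideanSpace ℝ (Fin n)) 1 |
          0 ≤ (y : EuclideanSpace ℝ (Fin n)) ⟨0, hn⟩} := by
        rw [← he]; exact mem_image_of_mem e hwF
      rw [hA, hhe]
      exact ⟨(e xw).2, hmem⟩
    · rintro ⟨hy1, hy2⟩
      have hyH : (⟨y, hy1⟩ : sphere (0 : EuclideanSpace ℝ (Fin n)) 1) ∈
          (⇑e) '' {x : frontier P | (x : EuclideanSpace ℝ (Fin n)) ∈ F} := by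
        rw [he]; exact hy2
      obtain ⟨x, hxF, hex⟩ := hyH
      refine ⟨g ↑x, mem_image_of_mem g hxF, ?_⟩
      have hgx : g ↑x ∈ sphere (0 : EuclideanSpace ℝ (Fin n)) 1 := by
        rw [← hgf]; exact mem_image_of_mem g x.2
      have hA : alexHomeo h (g ↑x) = ↑(h ⟨g ↑x, hgx⟩) := alexMap_sphere h hgx
      have hgs : gS x = ⟨g ↑x, hgx⟩ := Subtype.ext rfl
      have hhe : h ⟨g ↑x, hgx⟩ = e x := by
        rw [← hgs]
        show (gS.symm.trans e) (gS x) = e x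
        rw [Homeomorph.trans_apply, Homeomorph.symm_apply_apply]
      rw [hA, hhe, hex]
  let T := (g.trans (alexHomeo h)).trans (reflHomeo i0)
  have hT : T '' (P \ F) = DD i0 := by
    have h1 : ⇑T = ⇑(reflHomeo i0) ∘ (⇑(alexHomeo h) ∘ ⇑g) := rfl
    rw [h1, image_comp, image_comp,
      image_diff g.injective, hgP,
      image_diff (alexHomeo h).injective, hkey,
      image_closedBall_of_norm (alexHomeo h) (norm_alexMap h),
      image_diff (reflHomeo i0).injective,
      image_closedBall_of_norm (reflHomeo i0) (norm_reflMap i0),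
      reflHomeo_image_hemisphere i0]
    rfl
  exact ⟨(subHomeo T hT).trans (phiHomeo i0)⟩
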